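/- arXiv:1703.07807 — 3 statements merged into one kernel-verified Lean document; each statement's English description precedes it below -/
import Mathlib

section
/- Let s1 ≤ s2 ≤ ... ≤ s_{2k} be nonnegative reals with k ≥ 2. For any partition of {1,...,2k} into two sets of size k, let the value of the partition be the sum over the two groups of the minimum product s_i * s_j over pairs i ≠ j in the group. Then the homophilous partition {1,...,k}, {k+1,...,2k} maximizes this value; in particular s1*s2 + s_{k+1}*s_{k+2} is the maximum value. -/
/-- The minimum pairwise product `s i * s j` over ordered pairs of distinct
elements of a group `G`. -/
noncomputable def minPairVal {n : ℕ} (s : Fin n → ℝ) (G : Finset (Fin n)) : ℝ :=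
  sInf ((fun p : Fin n × Fin n => s p.1 * s p.2) '' (G.offDiag : Set (Fin n × Fin n)))

lemma minPairVal_le {n : ℕ} (s : Fin n → ℝ) {G : Finset (Fin n)} {i j : Fin n}
    (hi : i ∈ G) (hj : j ∈ G) (hij : i ≠ j) : minPairVal s G ≤ s i * s j := by
  apply csInf_le ((G.offDiag.finite_toSet.image _).bddBelow)
  exact ⟨(i, j), by simp [Finset.mem_offDiag, hi, hj, hij], rfl⟩

lemma le_minPairVal {n : ℕ} (s : Fin n → ℝ) {G : Finset (Fin n)} {c : ℝ} {i0 j0 : Fin n}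
    (hi0 : i0 ∈ G) (hj0 : j0 ∈ G) (h0 : i0 ≠ j0)
    (h : ∀ i ∈ G, ∀ j ∈ G, i ≠ j → c ≤ s i * s j) : c ≤ minPairVal s G := by
  apply le_csInf
  · exact ⟨_, ⟨(i0, j0), by simp [Finset.mem_offDiag, hi0, hj0, h0], rfl⟩⟩
  · rintro x ⟨⟨i, j⟩, hp, rfl⟩
    simp only [Finset.coe_offDiag, Set.mem_offDiag, Finset.mem_coe] at hp
    exact h i hp.1 j hp.2.1 hp.2.2

lemma prod_low {n : ℕ} (s : Fin n → ℝ) (hnn : ∀ i, 0 ≤ s i) (hmono : Monotone s)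
    {a b i j : Fin n} (hi : a.val ≤ i.val) (hj : a.val ≤ j.val)
    (hb : b.val ≤ max i.val j.val) : s a * s b ≤ s i * s j := by
  rcases le_total i.val j.val with h | h
  · have hbj : b.val ≤ j.val := by omega
    exact mul_le_mul (hmono hi) (hmono hbj) (hnn _) (hnn _)
  · have hbi : b.val ≤ i.val := by omega
    rw [mul_comm (s i)]
    exact mul_le_mul (hmono hj) (hmono hbi) (hnn _) (hnn _)

lemma prod_high {n : ℕ} (s : Fin n → ℝ) (hnn : ∀ i, 0 ≤ s i) (hmono : Monotone s)
    {a b i j : Fin n} (hi : i.val ≤ b.val) (hj : j.val ≤ b.val)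
    (hm : min i.val j.val ≤ a.val) : s i * s j ≤ s a * s b := by
  rcases le_total i.val j.val with h | h
  · have hia : i.val ≤ a.val := by omega
    exact mul_le_mul (hmono hia) (hmono hj) (hnn _) (hnn _)
  · have hja : j.val ≤ a.val := by omega
    rw [mul_comm (s i)]
    exact mul_le_mul (hmono hja) (hmono hi) (hnn _) (hnn _)

lemma aux_ineq (k : ℕ) (hk : 2 ≤ k)
    (s : Fin (2 * k) → ℝ) (hnn : ∀ i, 0 ≤ s i) (hmono : Monotone s)
    (A B : Finset (Fin (2 * k))) (hA : A.card = k) (hB : B.card = k)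
    (hdisj : Disjoint A B) (hcover : A ∪ B = Finset.univ)
    (h0 : (⟨0, (by omega : 0 + 0 < 2 * k)⟩ : Fin (2 * k)) ∈ A) :
    minPairVal s A + minPairVal s B ≤
      s ⟨0, (by omega : 0 + 0 < 2 * k)⟩ * s ⟨1, (by omega : 0 + 1 < 2 * k)⟩ + s ⟨k, (by omega : k + 0 < 2 * k)⟩ * s ⟨k + 1, (by omega : k + 1 + 0 < 2 * k)⟩ := by
  set T : Finset (Fin (2 * k)) := Finset.univ.filter fun j : Fin (2 * k) => j.val < k + 2 with hTdef
  have hT : T.card = k + 2 := by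
    have hle : k + 2 ≤ 2 * k := by omega
    have : T = Finset.map ⟨Fin.castLE hle, Fin.castLE_injective hle⟩ (Finset.univ : Finset (Fin (k + 2))) := by
      ext x
      simp only [hTdef, Finset.mem_filter, Finset.mem_map, Finset.mem_univ, true_and,
        Function.Embedding.coeFn_mk]
      constructor
      · intro hx; exact ⟨⟨x.val, hx⟩, rfl⟩
      · rintro ⟨y, rfl⟩; exact y.isLt
    rw [this, Finset.card_map, Finset.card_univ, Fintype.card_fin]
  have hsplit : (A ∩ T).card + (B ∩ T).card = k + 2 := by
    rw [← Finset.card_union_of_disjoint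
      (hdisj.mono Finset.inter_subset_left Finset.inter_subset_left),
      ← Finset.union_inter_distrib_right, hcover, Finset.univ_inter, hT]
  have hAT : (A ∩ T).card ≤ k := le_trans (Finset.card_le_card Finset.inter_subset_left) hA.le
  have hBTle : (B ∩ T).card ≤ k := le_trans (Finset.card_le_card Finset.inter_subset_left) hB.le
  have hBT2 : 1 < (B ∩ T).card := by omega
  have hAT2 : 1 < (A ∩ T).card := by omega
  have memT : ∀ x : Fin (2 * k), x ∈ T ↔ x.val < k + 2 := by
    intro x; simp [hTdef]
  by_cases h1 : (⟨1, by omega⟩ : Fin (2 * k)) ∈ A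
  · -- homophilous-ish case: 0 and 1 both in A
    have hAle : minPairVal s A ≤ s ⟨0, by omega⟩ * s ⟨1, by omega⟩ :=
      minPairVal_le s h0 h1 (by simp [Fin.ext_iff])
    obtain ⟨y, hy, z, hz, hyz⟩ := Finset.one_lt_card.mp hBT2
    have hyB := (Finset.mem_inter.mp hy).1
    have hzB := (Finset.mem_inter.mp hz).1
    have hyT := (memT y).mp (Finset.mem_inter.mp hy).2
    have hzT := (memT z).mp (Finset.mem_inter.mp hz).2
    have hBle : minPairVal s B ≤ s y * s z := minPairVal_le s hyB hzB hyz
    have hval : y.val ≠ z.val := fun h => hyz (Fin.ext h)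
    have hprod : s y * s z ≤ s ⟨k, by omega⟩ * s ⟨k + 1, by omega⟩ :=
      prod_high s hnn hmono (by simp; omega) (by simp; omega) (by simp; omega)
    linarith
  · -- 1 ∈ B
    obtain ⟨t, ht, htne⟩ := Finset.exists_mem_ne hAT2 ⟨0, by omega⟩
    have h1B : (⟨1, by omega⟩ : Fin (2 * k)) ∈ B := by
      have : (⟨1, by omega⟩ : Fin (2 * k)) ∈ A ∪ B := by rw [hcover]; exact Finset.mem_univ _
      rcases Finset.mem_union.mp this with h | h
      · exact absurd h h1
      · exact h
    obtain ⟨z, hz, hzne⟩ := Finset.exists_mem_ne hBT2 ⟨1, by omega⟩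
    have htA := (Finset.mem_inter.mp ht).1
    have hzB := (Finset.mem_inter.mp hz).1
    have htT := (memT t).mp (Finset.mem_inter.mp ht).2
    have hzT := (memT z).mp (Finset.mem_inter.mp hz).2
    have htz : t ≠ z := by
      intro h; subst h
      exact (Finset.disjoint_left.mp hdisj htA) hzB
    have htval : t.val ≠ 0 := fun h => htne (Fin.ext h)
    have hzval : z.val ≠ 1 := fun h => hzne (Fin.ext h)
    have htzval : t.val ≠ z.val := fun h => htz (Fin.ext h)
    have hAle : minPairVal s A ≤ s ⟨0, by omega⟩ * s t :=
      minPairVal_le s h0 htA (fun h => htne h.symm)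
    have hBle : minPairVal s B ≤ s ⟨1, by omega⟩ * s z :=
      minPairVal_le s h1B hzB (fun h => hzne h.symm)
    have hprod : s t * s z ≤ s ⟨k, by omega⟩ * s ⟨k + 1, by omega⟩ :=
      prod_high s hnn hmono (by simp; omega) (by simp; omega) (by simp; omega)
    have h1t : s ⟨1, by omega⟩ ≤ s t := hmono (by simp [Fin.le_def]; omega)
    have h0z : s ⟨0, by omega⟩ ≤ s z := hmono (by simp [Fin.le_def])
    nlinarith [mul_nonneg (sub_nonneg.mpr h1t) (sub_nonneg.mpr h0z)]

theorem homophilous_optimal_AoM_two_groups (k : ℕ) (hk : 2 ≤ k)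
    (s : Fin (2 * k) → ℝ) (hnn : ∀ i, 0 ≤ s i) (hmono : Monotone s)
    (A B : Finset (Fin (2 * k))) (hA : A.card = k) (hB : B.card = k)
    (hdisj : Disjoint A B) (hcover : A ∪ B = Finset.univ) :
    minPairVal s A + minPairVal s B ≤
      s ⟨0, by omega⟩ * s ⟨1, by omega⟩ + s ⟨k, by omega⟩ * s ⟨k + 1, by omega⟩ ∧
    minPairVal s (Finset.univ.filter fun j : Fin (2 * k) => j.val < k) +
        minPairVal s (Finset.univ.filter fun j : Fin (2 * k) => k ≤ j.val) =
      s ⟨0, by omega⟩ * s ⟨1, by omega⟩ + s ⟨k, by omega⟩ * s ⟨k + 1, by omega⟩ := by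
  constructor
  · have h0 : (⟨0, by omega⟩ : Fin (2 * k)) ∈ A ∪ B := by
      rw [hcover]; exact Finset.mem_univ _
    rcases Finset.mem_union.mp h0 with h | h
    · exact aux_ineq k hk s hnn hmono A B hA hB hdisj hcover h
    · have := aux_ineq k hk s hnn hmono B A hB hA hdisj.symm
        (by rw [Finset.union_comm]; exact hcover) h
      linarith
  · have hG1 : minPairVal s (Finset.univ.filter fun j : Fin (2 * k) => j.val < k)
        = s ⟨0, by omega⟩ * s ⟨1, by omega⟩ := by
      apply le_antisymm
      · exact minPairVal_le s (by simp; omega) (by simp; omega) (by simp [Fin.ext_iff])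
      · apply le_minPairVal s (i0 := ⟨0, by omega⟩) (j0 := ⟨1, by omega⟩)
          (by simp; omega) (by simp; omega) (by simp [Fin.ext_iff])
        intro i hi j hj hij
        simp only [Finset.mem_filter] at hi hj
        have : i.val ≠ j.val := fun h => hij (Fin.ext h)
        exact prod_low s hnn hmono (by simp) (by simp) (by simp; omega)
    have hG2 : minPairVal s (Finset.univ.filter fun j : Fin (2 * k) => k ≤ j.val)
        = s ⟨k, by omega⟩ * s ⟨k + 1, by omega⟩ := by
      apply le_antisymm
      · exact minPairVal_le s (by simp) (by simp) (by simp [Fin.ext_iff])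
      · apply le_minPairVal s (i0 := ⟨k, by omega⟩) (j0 := ⟨k + 1, by omega⟩)
          (by simp) (by simp) (by simp [Fin.ext_iff])
        intro i hi j hj hij
        simp only [Finset.mem_filter] at hi hj
        have : i.val ≠ j.val := fun h => hij (Fin.ext h)
        exact prod_low s hnn hmono (by simp; omega) (by simp; omega) (by simp; omega)
    rw [hG1, hG2]
end

section
/- Let s1 ≥ s2 ≥ ... ≥ sn > 0 be scores with n = m*k, and consider partitions of {1,...,n} into m groups of size k each. The maximum over all such partitions of ∑ over groups of (sum of scores in the group)^2 is attained by the homophilous partition, where group i consists of indices {(i-1)k+1, ..., ik}. -/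
open Finset

lemma fin_le_strictMono {r n : ℕ} (f : Fin r → Fin n) (hf : StrictMono f) :
    ∀ i : Fin r, i.val ≤ (f i).val := by
  have key : ∀ p : ℕ, ∀ h : p < r, p ≤ (f ⟨p, h⟩).val := by
    intro p
    induction p with
    | zero => intro h; exact Nat.zero_le _
    | succ q ih =>
      intro h
      have hq : q < r := Nat.lt_of_succ_lt h
      have h1 : f ⟨q, hq⟩ < f ⟨q + 1, h⟩ := hf (by simp [Fin.lt_def])
      have h2 := ih hq
      have := Fin.lt_def.mp h1
      omega
  intro i
  have := key i.val i.isLt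
  simpa using this

lemma filter_lt_eq_map {m t : ℕ} (h : t ≤ m) :
    Finset.univ.filter (fun i : Fin m => i.val < t) =
      Finset.map (Fin.castLEEmb h) Finset.univ := by
  ext j
  simp only [mem_filter, mem_univ, true_and, mem_map, Fin.castLEEmb_apply]
  constructor
  · intro hj
    exact ⟨⟨j.val, hj⟩, Fin.ext rfl⟩
  · rintro ⟨a, rfl⟩
    exact a.isLt

lemma top_sum {n r : ℕ} (s : Fin n → ℝ) (hsorted : Antitone s)
    (B : Finset (Fin n)) (hB : B.card = r) :
    ∑ j ∈ B, s j ≤ ∑ j ∈ Finset.univ.filter (fun j : Fin n => j.val < r), s j := by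
  have hrn : r ≤ n := by
    have := B.card_le_univ
    simpa [hB] using this
  have hBmap : B = Finset.map (B.orderEmbOfFin hB).toEmbedding Finset.univ := by
    ext j
    simp only [mem_map, mem_univ, true_and]
    constructor
    · intro hj
      have : j ∈ Set.range (B.orderEmbOfFin hB) := by
        rw [Finset.range_orderEmbOfFin]; exact hj
      obtain ⟨t, ht⟩ := this
      exact ⟨t, ht⟩
    · rintro ⟨t, rfl⟩
      exact Finset.orderEmbOfFin_mem B hB t
  rw [hBmap, Finset.sum_map, filter_lt_eq_map hrn, Finset.sum_map]
  apply Finset.sum_le_sum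
  intro t _
  apply hsorted
  show (Fin.castLEEmb hrn t) ≤ _
  rw [Fin.le_def]
  exact fin_le_strictMono _ (B.orderEmbOfFin hB).strictMono t

lemma karamata_sq (m : ℕ) (g h : ℕ → ℝ)
    (hg : ∀ i j, i ≤ j → j < m → g j ≤ g i)
    (hh : ∀ i j, i ≤ j → j < m → h j ≤ h i)
    (hpre : ∀ t, t ≤ m → ∑ i ∈ range t, g i ≤ ∑ i ∈ range t, h i)
    (hsum : ∑ i ∈ range m, g i = ∑ i ∈ range m, h i) :
    ∑ i ∈ range m, (g i) ^ 2 ≤ ∑ i ∈ range m, (h i) ^ 2 := by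
  set c : ℕ → ℝ := fun i => h i + g i with hc
  set d : ℕ → ℝ := fun i => h i - g i with hd
  have key : ∑ i ∈ range m, c i • d i =
      c (m - 1) • (∑ i ∈ range m, d i) -
        ∑ i ∈ range (m - 1), (c (i + 1) - c i) • (∑ j ∈ range (i + 1), d j) :=
    Finset.sum_range_by_parts c d m
  have hDm : ∑ i ∈ range m, d i = 0 := by
    simp only [hd, Finset.sum_sub_distrib]
    linarith [hsum]
  have hterm : ∀ i ∈ range (m - 1), (c (i + 1) - c i) • (∑ j ∈ range (i + 1), d j) ≤ 0 := by
    intro i hi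
    rw [mem_range] at hi
    have h1 : c (i + 1) - c i ≤ 0 := by
      have := hg i (i + 1) (Nat.le_succ i) (by omega)
      have := hh i (i + 1) (Nat.le_succ i) (by omega)
      simp only [hc]
      linarith
    have h2 : 0 ≤ ∑ j ∈ range (i + 1), d j := by
      simp only [hd, Finset.sum_sub_distrib]
      have := hpre (i + 1) (by omega)
      linarith
    exact mul_nonpos_of_nonpos_of_nonneg h1 h2
  have hsum2 : 0 ≤ ∑ i ∈ range m, c i • d i := by
    rw [key, hDm]
    have := Finset.sum_nonpos hterm
    simp only [smul_zero]
    linarith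
  have hexp : ∀ i, c i • d i = (h i) ^ 2 - (g i) ^ 2 := by
    intro i; simp only [hc, hd, smul_eq_mul]; ring
  rw [Finset.sum_congr rfl (fun i _ => hexp i), Finset.sum_sub_distrib] at hsum2
  linarith

def blk {n m : ℕ} (k : ℕ) (i : Fin m) : Finset (Fin n) :=
  Finset.univ.filter (fun j : Fin n => i.val * k ≤ j.val ∧ j.val < (i.val + 1) * k)

lemma blk_bound {n m k : ℕ} (hnk : n = m * k) (i : Fin m) (r : Fin k) :
    i.val * k + r.val < n := by
  have h1 : i.val + 1 ≤ m := i.isLt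
  have h2 : (i.val + 1) * k ≤ m * k := Nat.mul_le_mul_right k h1
  have h3 : (i.val + 1) * k = i.val * k + k := Nat.succ_mul _ _
  have h4 := r.isLt
  omega

lemma blk_repar {n m k : ℕ} (hnk : n = m * k) (s : Fin n → ℝ) (i : Fin m) :
    ∑ j ∈ blk k i, s j = ∑ r : Fin k, s ⟨i.val * k + r.val, blk_bound hnk i r⟩ := by
  have h3 : (i.val + 1) * k = i.val * k + k := Nat.succ_mul _ _
  apply Finset.sum_bij' (i := fun j hj => (⟨j.val - i.val * k, by
        simp only [blk, mem_filter] at hj; omega⟩ : Fin k))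
    (j := fun r _ => (⟨i.val * k + r.val, blk_bound hnk i r⟩ : Fin n))
  case hi => intro a ha; exact mem_univ _
  case hj =>
    intro r _
    simp only [blk, mem_filter, mem_univ, true_and]
    have := r.isLt
    omega
  case left_neg =>
    intro a ha
    simp only [blk, mem_filter] at ha
    apply Fin.ext; simp; omega
  case right_neg =>
    intro r _
    apply Fin.ext; simp
  case h =>
    intro a ha
    simp only [blk, mem_filter] at ha
    congr 1
    apply Fin.ext; simp; omega

lemma blk_disjoint {n m k : ℕ} {i i' : Fin m} (hne : i ≠ i') :
    Disjoint (blk (n := n) k i) (blk (n := n) k i') := by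
  rw [Finset.disjoint_left]
  intro j hj hj'
  simp only [blk, mem_filter] at hj hj'
  have hv : i.val ≠ i'.val := fun h => hne (Fin.ext h)
  rcases Nat.lt_or_ge i.val i'.val with h | h
  · have : (i.val + 1) * k ≤ i'.val * k := Nat.mul_le_mul_right k (by omega)
    omega
  · have : (i'.val + 1) * k ≤ i.val * k := Nat.mul_le_mul_right k (by omega)
    omega

lemma blk_prefix {n m k : ℕ} (hnk : n = m * k) (hk : 0 < k) (s : Fin n → ℝ)
    (t : ℕ) :
    ∑ i ∈ Finset.univ.filter (fun i : Fin m => i.val < t), ∑ j ∈ blk k i, s j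
      = ∑ j ∈ Finset.univ.filter (fun j : Fin n => j.val < t * k), s j := by
  rw [← Finset.sum_biUnion (fun i _ i' _ hne => blk_disjoint hne)]
  congr 1
  ext j
  simp only [mem_biUnion, mem_filter, mem_univ, true_and, blk]
  constructor
  · rintro ⟨i, hi, h1, h2⟩
    have : (i.val + 1) * k ≤ t * k := Nat.mul_le_mul_right k (by omega)
    omega
  · intro hj
    have hjn : j.val < m * k := hnk ▸ j.isLt
    have him : j.val / k < m := (Nat.div_lt_iff_lt_mul hk).mpr (by omega)
    refine ⟨⟨j.val / k, him⟩, ?_, ?_, ?_⟩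
    · exact (Nat.div_lt_iff_lt_mul hk).mpr (by omega)
    · simpa [Nat.mul_comm] using Nat.div_mul_le_self j.val k
    · exact (Nat.div_lt_iff_lt_mul hk).mp (Nat.lt_succ_self _)

lemma blk_antitone {n m k : ℕ} (hnk : n = m * k) (s : Fin n → ℝ) (hsorted : Antitone s) :
    Antitone (fun i : Fin m => ∑ j ∈ blk k i, s j) := by
  intro a b hab
  simp only
  rw [blk_repar hnk, blk_repar hnk]
  apply Finset.sum_le_sum
  intro r _
  apply hsorted
  rw [Fin.le_def]
  simp only
  have : a.val * k ≤ b.val * k := Nat.mul_le_mul_right k hab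
  omega

lemma range_sum_eq {m : ℕ} (F : Fin m → ℝ) (t : ℕ) (ht : t ≤ m) :
    ∑ i ∈ range t, (if h : i < m then F ⟨i, h⟩ else 0)
      = ∑ i ∈ Finset.univ.filter (fun i : Fin m => i.val < t), F i := by
  rw [filter_lt_eq_map ht, Finset.sum_map,
    ← Fin.sum_univ_eq_sum_range (fun i => if h : i < m then F ⟨i, h⟩ else 0) t]
  apply Finset.sum_congr rfl
  intro x _
  rw [dif_pos (lt_of_lt_of_le x.isLt ht)]
  rfl

theorem homophilous_optimal_AoA (n m k : ℕ) (hnk : n = m * k) (hk : 0 < k)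
    (s : Fin n → ℝ) (hs : ∀ i, 0 < s i) (hsorted : Antitone s)
    (P : Fin m → Finset (Fin n)) (hcard : ∀ i, (P i).card = k)
    (hdisj : ∀ i j, i ≠ j → Disjoint (P i) (P j))
    (hcover : Finset.univ.biUnion P = Finset.univ) :
    ∑ i : Fin m, (∑ j ∈ P i, s j) ^ 2 ≤
      ∑ i : Fin m,
        (∑ j ∈ Finset.univ.filter
            (fun j : Fin n => i.val * k ≤ j.val ∧ j.val < (i.val + 1) * k), s j) ^ 2 := by
  set G : Fin m → ℝ := fun i => ∑ j ∈ P i, s j with hG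
  set H : Fin m → ℝ := fun i => ∑ j ∈ blk k i, s j with hH
  -- the RHS is ∑ (H i)^2
  have hRHS : ∑ i : Fin m,
      (∑ j ∈ Finset.univ.filter
          (fun j : Fin n => i.val * k ≤ j.val ∧ j.val < (i.val + 1) * k), s j) ^ 2
      = ∑ i : Fin m, (H i) ^ 2 := rfl
  rw [hRHS]
  -- sort G in decreasing order
  set σ : Equiv.Perm (Fin m) := Tuple.sort G with hσ
  set e : Fin m ≃ Fin m := Fin.revPerm.trans σ with he
  set G' : Fin m → ℝ := fun i => G (e i) with hG'def
  have hG'anti : Antitone G' := by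
    intro a b hab
    exact Tuple.monotone_sort G (show Fin.rev b ≤ Fin.rev a from Fin.rev_le_rev.mpr hab)
  have hHanti : Antitone H := blk_antitone hnk s hsorted
  -- prefix sums
  have hQcard : ∀ t : ℕ, t ≤ m →
      (Finset.univ.filter (fun i : Fin m => i.val < t)).card = t := by
    intro t ht
    rw [filter_lt_eq_map ht, Finset.card_map, Finset.card_univ, Fintype.card_fin]
  have hprefix : ∀ t : ℕ, t ≤ m →
      ∑ i ∈ Finset.univ.filter (fun i : Fin m => i.val < t), G' i ≤
        ∑ i ∈ Finset.univ.filter (fun i : Fin m => i.val < t), H i := by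
    intro t ht
    set Q := Finset.univ.filter (fun i : Fin m => i.val < t) with hQ
    set T := Q.image e with hT
    have hTcard : T.card = t := by
      rw [hT, Finset.card_image_of_injective _ e.injective, hQcard t ht]
    have h1 : ∑ i ∈ Q, G' i = ∑ i ∈ T, G i := by
      rw [hT, Finset.sum_image (fun x _ y _ hxy => e.injective hxy)]
    set B := T.biUnion P with hB
    have hBcard : B.card = t * k := by
      rw [hB, Finset.card_biUnion (fun i _ i' _ hne => hdisj i i' hne)]
      rw [Finset.sum_congr rfl (fun i _ => hcard i), Finset.sum_const, hTcard, smul_eq_mul]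
    have h2 : ∑ i ∈ T, G i = ∑ j ∈ B, s j := by
      rw [hB, Finset.sum_biUnion (fun i _ i' _ hne => hdisj i i' hne)]
    have h3 : ∑ j ∈ B, s j ≤
        ∑ j ∈ Finset.univ.filter (fun j : Fin n => j.val < t * k), s j :=
      top_sum s hsorted B hBcard
    have h4 : ∑ i ∈ Q, H i =
        ∑ j ∈ Finset.univ.filter (fun j : Fin n => j.val < t * k), s j :=
      blk_prefix hnk hk s t
    rw [h1, h2, h4]
    exact h3
  -- total sums are equal
  have hQm : Finset.univ.filter (fun i : Fin m => i.val < m) = (Finset.univ : Finset (Fin m)) :=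
    Finset.filter_true_of_mem (fun i _ => i.isLt)
  have hfull : Finset.univ.filter (fun j : Fin n => j.val < m * k) = (Finset.univ : Finset (Fin n)) :=
    Finset.filter_true_of_mem (fun j _ => hnk ▸ j.isLt)
  have htotal : ∑ i : Fin m, G' i = ∑ i : Fin m, H i := by
    have hGtot : ∑ i : Fin m, G i = ∑ j : Fin n, s j := by
      rw [← hcover, Finset.sum_biUnion (fun i _ i' _ hne => hdisj i i' hne)]
    have hHtot : ∑ i : Fin m, H i = ∑ j : Fin n, s j := by
      have := blk_prefix (m := m) hnk hk s m
      rw [hQm, hfull] at this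
      exact this
    rw [hHtot, ← hGtot]
    exact Equiv.sum_comp e G
  -- apply Karamata
  set g : ℕ → ℝ := fun i => if h : i < m then G' ⟨i, h⟩ else 0 with hg
  set h : ℕ → ℝ := fun i => if h : i < m then H ⟨i, h⟩ else 0 with hh
  have hgr : ∀ t : ℕ, t ≤ m → ∑ i ∈ range t, g i
      = ∑ i ∈ Finset.univ.filter (fun i : Fin m => i.val < t), G' i :=
    fun t ht => range_sum_eq G' t ht
  have hhr : ∀ t : ℕ, t ≤ m → ∑ i ∈ range t, h i
      = ∑ i ∈ Finset.univ.filter (fun i : Fin m => i.val < t), H i :=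
    fun t ht => range_sum_eq H t ht
  have hkar := karamata_sq m g h
    (fun i j hij hjm => by
      rw [hg]
      simp only
      rw [dif_pos hjm, dif_pos (lt_of_le_of_lt hij hjm)]
      exact hG'anti (show (⟨i, _⟩ : Fin m) ≤ ⟨j, hjm⟩ from hij))
    (fun i j hij hjm => by
      rw [hh]
      simp only
      rw [dif_pos hjm, dif_pos (lt_of_le_of_lt hij hjm)]
      exact hHanti (show (⟨i, _⟩ : Fin m) ≤ ⟨j, hjm⟩ from hij))
    (fun t ht => by rw [hgr t ht, hhr t ht]; exact hprefix t ht)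
    (by rw [hgr m le_rfl, hhr m le_rfl, hQm]; exact htotal)
  -- convert squares
  have hsqg : ∑ i ∈ range m, (g i) ^ 2 = ∑ i : Fin m, (G' i) ^ 2 := by
    have : ∀ i ∈ range m, (g i) ^ 2 = if h : i < m then (G' ⟨i, h⟩) ^ 2 else 0 := by
      intro i hi
      rw [mem_range] at hi
      rw [hg]
      simp only
      rw [dif_pos hi, dif_pos hi]
    rw [Finset.sum_congr rfl this, range_sum_eq (fun i => (G' i) ^ 2) m le_rfl, hQm]
  have hsqh : ∑ i ∈ range m, (h i) ^ 2 = ∑ i : Fin m, (H i) ^ 2 := by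
    have : ∀ i ∈ range m, (h i) ^ 2 = if h : i < m then (H ⟨i, h⟩) ^ 2 else 0 := by
      intro i hi
      rw [mem_range] at hi
      rw [hh]
      simp only
      rw [dif_pos hi, dif_pos hi]
    rw [Finset.sum_congr rfl this, range_sum_eq (fun i => (H i) ^ 2) m le_rfl, hQm]
  have hGG' : ∑ i : Fin m, (G i) ^ 2 = ∑ i : Fin m, (G' i) ^ 2 :=
    (Equiv.sum_comp e (fun i => (G i) ^ 2)).symm
  calc ∑ i : Fin m, (G i) ^ 2 = ∑ i : Fin m, (G' i) ^ 2 := hGG'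
    _ = ∑ i ∈ range m, (g i) ^ 2 := hsqg.symm
    _ ≤ ∑ i ∈ range m, (h i) ^ 2 := hkar
    _ = ∑ i : Fin m, (H i) ^ 2 := hsqh
end

section
/- In the greedy analysis for MoA: let S_p and S_q be the final total scores of two groups p, q with group size k, built from items in nonincreasing value order, such that at some point when q received its k'-th item, group p had k'' items with ∑_{i≤k''} s_{p,i} ≥ ∑_{j≤k'-1} s_{q,j} and s_{q,ℓ} ≤ s_{p,k''} for ℓ = k', and s_{q,ℓ} ≤ s_{p,k} for all ℓ > k'. Then S_q ≤ 2 S_p. -/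
theorem greedy_moa_two_groups (k k' k'' : ℕ) (sp sq : ℕ → ℝ)
    (hk' : 2 ≤ k') (hk'k : k' ≤ k) (hk'' : 1 ≤ k'') (hk''k : k'' < k)
    (hpmono : ∀ a b : ℕ, a ≤ b → sp b ≤ sp a) (hpnn : ∀ i, 0 ≤ sp i)
    (hqmono : ∀ a b : ℕ, a ≤ b → sq b ≤ sq a) (hqnn : ∀ i, 0 ≤ sq i)
    (h1 : ∑ i ∈ Finset.range k'', sp i ≥ ∑ j ∈ Finset.range (k' - 1), sq j)
    (h2 : sq (k' - 1) ≤ sp (k'' - 1))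
    (h3 : ∀ ℓ, k' ≤ ℓ → ℓ < k → sq ℓ ≤ sp (k - 1))
    (h4 : ∀ ℓ, ℓ < k → sp ℓ ≥ sp (k - 1)) :
    ∑ j ∈ Finset.range k, sq j ≤ 2 * ∑ i ∈ Finset.range k, sp i := by
  have hm : k' - 1 + 1 = k' := by omega
  -- split sq sum
  have hsplit : ∑ j ∈ Finset.range k, sq j
      = (∑ j ∈ Finset.range (k' - 1), sq j + sq (k' - 1))
        + ∑ j ∈ Finset.Ico k' k, sq j := by
    rw [← Finset.sum_range_succ, hm, Finset.range_eq_Ico, Finset.range_eq_Ico]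
    exact (Finset.sum_Ico_consecutive sq (Nat.zero_le _) hk'k).symm
  have hC : ∑ j ∈ Finset.Ico k' k, sq j ≤ (k - k') • sp (k - 1) := by
    have := Finset.sum_le_card_nsmul (Finset.Ico k' k) sq (sp (k - 1))
      (fun x hx => by
        simp only [Finset.mem_Ico] at hx
        exact h3 x hx.1 hx.2)
    simpa [Nat.card_Ico] using this
  -- sp sum lower bounds
  have hP1 : ∑ i ∈ Finset.range k'', sp i ≤ ∑ i ∈ Finset.range k, sp i :=
    Finset.sum_le_sum_of_subset_of_nonneg
      (Finset.range_subset_range.2 (le_of_lt hk''k)) (fun i _ _ => hpnn i)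
  have hmem : k'' - 1 ∈ Finset.range k := Finset.mem_range.2 (by omega)
  have herase : sp (k'' - 1) + ∑ i ∈ (Finset.range k).erase (k'' - 1), sp i
      = ∑ i ∈ Finset.range k, sp i := Finset.add_sum_erase _ _ hmem
  have hcard : ((Finset.range k).erase (k'' - 1)).card = k - 1 := by
    rw [Finset.card_erase_of_mem hmem, Finset.card_range]
  have hlow : (k - 1) • sp (k - 1) ≤ ∑ i ∈ (Finset.range k).erase (k'' - 1), sp i := by
    have := Finset.card_nsmul_le_sum ((Finset.range k).erase (k'' - 1)) sp (sp (k - 1))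
      (fun x hx => h4 x (Finset.mem_range.1 (Finset.mem_of_mem_erase hx)))
    rwa [hcard] at this
  have hnn : (0:ℝ) ≤ sp (k - 1) := hpnn _
  have hkk' : ((k - k' : ℕ) : ℝ) ≤ ((k - 1 : ℕ) : ℝ) := by
    exact_mod_cast Nat.sub_le_sub_left (by omega) k
  have hP2 : sp (k'' - 1) + (k - k') • sp (k - 1) ≤ ∑ i ∈ Finset.range k, sp i := by
    rw [← herase]
    have : ((k - k' : ℕ) : ℝ) * sp (k - 1) ≤ ((k - 1 : ℕ) : ℝ) * sp (k - 1) :=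
      mul_le_mul_of_nonneg_right hkk' hnn
    simp only [nsmul_eq_mul] at hlow ⊢
    linarith
  rw [hsplit]
  have hB : sq (k' - 1) ≤ sp (k'' - 1) := h2
  simp only [nsmul_eq_mul] at hC hP2
  linarith
end
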